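/- Let X and Y be Hilbert spaces, T : X → Y a bounded linear operator (no finiteness assumption on dim N(T)) with a least-squares projection approximation {(X_n, T_n)}. If sup_n ‖T_n† T‖ < +∞, then the LPA has kernel approximability and sup_n gap(P_{N(T)^⊥}(X_n), T*T(X_n)) < 1 (i.e., the offset angles θ_n = arcsin gap(T†T(X_n), T*T(X_n)) satisfy sup_n θ_n < π/2). -/

import Mathlib

open Filter Topology Metric Submodule ContinuousLinearMap

/-- Orthogonal projection onto a subspace `K` (as an operator `H →L[ℝ] H`),
defined whenever `K` admits orthogonal projections (e.g. `K` closed). -/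
noncomputable def orthProj {H : Type*} [NormedAddCommGroup H] [InnerProductSpace ℝ H]
    (K : Submodule ℝ H) : H →L[ℝ] H :=
  open scoped Classical in
  if h : HasOrthogonalProjection K then
    haveI := h
    K.subtypeL.comp (orthogonalProjection K)
  else 0

/-- `δ(M,N) = sup {dist(x,N) : x ∈ M, ‖x‖ = 1}` (0 if `M = {0}`, as `sSup ∅ = 0` in `ℝ`). -/
noncomputable def deltaSub {H : Type*} [NormedAddCommGroup H] [InnerProductSpace ℝ H]
    (M N : Submodule ℝ H) : ℝ :=
  sSup {d : ℝ | ∃ x ∈ M, ‖x‖ = 1 ∧ d = Metric.infDist x (N : Set H)}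

/-- The gap between two subspaces. -/
noncomputable def gapSub {H : Type*} [NormedAddCommGroup H] [InnerProductSpace ℝ H]
    (M N : Submodule ℝ H) : ℝ :=
  max (deltaSub M N) (deltaSub N M)

section aux
variable {H : Type*} [NormedAddCommGroup H] [InnerProductSpace ℝ H]

lemma orthProj_apply (K : Submodule ℝ H) [h : HasOrthogonalProjection K] (x : H) :
    orthProj K x = (orthogonalProjection K x : H) := by
  rw [orthProj, dif_pos h]; rfl

lemma orthProj_mem (K : Submodule ℝ H) [HasOrthogonalProjection K] (x : H) :
    orthProj K x ∈ K := by rw [orthProj_apply]; exact (orthogonalProjection K x).2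

lemma sub_orthProj_mem (K : Submodule ℝ H) [HasOrthogonalProjection K] (x : H) :
    x - orthProj K x ∈ Kᗮ := by rw [orthProj_apply]; exact K.sub_starProjection_mem_orthogonal x

lemma orthProj_eq_self (K : Submodule ℝ H) [HasOrthogonalProjection K] {x : H} (hx : x ∈ K) :
    orthProj K x = x := by rw [orthProj_apply]; exact K.starProjection_eq_self_iff.2 hx

lemma orthProj_eq_zero (K : Submodule ℝ H) [HasOrthogonalProjection K] {x : H} (hx : x ∈ Kᗮ) :
    orthProj K x = 0 := by
  rw [orthProj_apply]
  simp [Submodule.orthogonalProjectionOnto_apply_of_mem_orthogonal hx]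

lemma inner_orthProj_sub (K : Submodule ℝ H) [HasOrthogonalProjection K] (x : H) {y : H}
    (hy : y ∈ K) : inner ℝ (x - orthProj K x) y = (0 : ℝ) := by
  rw [real_inner_comm]
  exact (K.mem_orthogonal _).1 (sub_orthProj_mem K x) y hy

lemma norm_sq_orthProj_add (K : Submodule ℝ H) [HasOrthogonalProjection K] (x : H) :
    ‖x‖ ^ 2 = ‖orthProj K x‖ ^ 2 + ‖x - orthProj K x‖ ^ 2 := by
  have h := inner_orthProj_sub K x (orthProj_mem K x)
  have hx : x = orthProj K x + (x - orthProj K x) := by abel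
  nth_rewrite 1 [hx]
  rw [norm_add_sq_real, real_inner_comm, h]
  ring

lemma norm_orthProj_le (K : Submodule ℝ H) [HasOrthogonalProjection K] (x : H) :
    ‖orthProj K x‖ ≤ ‖x‖ := by
  nlinarith [norm_sq_orthProj_add K x, norm_nonneg x, norm_nonneg (orthProj K x),
    sq_nonneg (‖x - orthProj K x‖)]

lemma inner_orthProj_self (K : Submodule ℝ H) [HasOrthogonalProjection K] (x : H) :
    inner ℝ (orthProj K x) x = (‖orthProj K x‖ : ℝ) ^ 2 := by
  have hx : x = orthProj K x + (x - orthProj K x) := by abel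
  have h := inner_orthProj_sub K x (orthProj_mem K x)
  rw [real_inner_comm] at h
  nth_rewrite 2 [hx]
  rw [inner_add_right, real_inner_self_eq_norm_sq, h, add_zero]

end aux

variable {X Y : Type*} [NormedAddCommGroup X] [InnerProductSpace ℝ X] [CompleteSpace X]
  [NormedAddCommGroup Y] [InnerProductSpace ℝ Y] [CompleteSpace Y]

set_option maxHeartbeats 2000000 in
/-- Without any finiteness assumption on `N(T)`: `supₙ ‖Tₙ†T‖ < ∞` implies kernel
approximability and `supₙ gap(P_{N(T)ᗮ}(Xₙ), T*T(Xₙ)) < 1`. -/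
theorem stmt18
    (T : X →L[ℝ] Y) (Xn : ℕ → Submodule ℝ X)
    (hfin : ∀ n, FiniteDimensional ℝ (Xn n))
    (hinf : ¬ FiniteDimensional ℝ X)
    (hproj : ∀ x : X, Tendsto (fun n => orthProj (Xn n) x) atTop (𝓝 x))
    (Tn : ℕ → X →L[ℝ] Y) (hTn : ∀ n, Tn n = T.comp (orthProj (Xn n)))
    (Tdagn : ℕ → Y → X)
    (hTdagn : ∀ n (y : Y), Tdagn n y ∈ (LinearMap.ker (Tn n : X →ₗ[ℝ] Y))ᗮ ∧
      (Tn n) (Tdagn n y) = orthProj ((Xn n).map (T : X →ₗ[ℝ] Y)) y)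
    (hbound : ∃ C : ℝ, ∀ n (x : X), ‖Tdagn n (T x)‖ ≤ C * ‖x‖) :
    (∀ x : X, x ∈ LinearMap.ker (T : X →ₗ[ℝ] Y) ↔
      Tendsto (fun n => Metric.infDist x ((LinearMap.ker (T : X →ₗ[ℝ] Y) ⊓ Xn n : Submodule ℝ X) : Set X))
        atTop (𝓝 0)) ∧
    (∃ c : ℝ, c < 1 ∧ ∀ n, gapSub ((Xn n).map ((orthProj ((LinearMap.ker (T : X →ₗ[ℝ] Y))ᗮ) : X →L[ℝ] X) : X →ₗ[ℝ] X)) ((Xn n).map (((ContinuousLinearMap.adjoint T).comp T : X →L[ℝ] X) : X →ₗ[ℝ] X)) ≤ c) := by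
  obtain ⟨C₀, hC₀⟩ := hbound
  set C : ℝ := max C₀ 1 with hCdef
  have hC1 : (1 : ℝ) ≤ C := le_max_right _ _
  have hCpos : (0 : ℝ) < C := lt_of_lt_of_le one_pos hC1
  have hC : ∀ n (x : X), ‖Tdagn n (T x)‖ ≤ C * ‖x‖ := fun n x =>
    (hC₀ n x).trans (mul_le_mul_of_nonneg_right (le_max_left _ _) (norm_nonneg x))
  -- basic instances and facts, uniform in n
  haveI hN₀c : CompleteSpace (LinearMap.ker (T : X →ₗ[ℝ] Y)) :=
    (ContinuousLinearMap.isClosed_ker T).completeSpace_coe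
  set N₀ : Submodule ℝ X := LinearMap.ker (T : X →ₗ[ℝ] Y) with hN₀def
  haveI : ∀ n, FiniteDimensional ℝ (Xn n) := hfin
  have hfinT : ∀ n, FiniteDimensional ℝ ((Xn n).map (T : X →ₗ[ℝ] Y)) := by
    intro n
    have h : (Xn n).map (T : X →ₗ[ℝ] Y) = (Xn n).map T.toLinearMap := rfl
    rw [h]; exact Module.Finite.map (Xn n) T.toLinearMap
  haveI := hfinT
  -- Tn agrees with T on Xn
  have hTnXn : ∀ n, ∀ u ∈ Xn n, Tn n u = T u := by
    intro n u hu
    rw [hTn n, ContinuousLinearMap.comp_apply, orthProj_eq_self (Xn n) hu]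
  -- Xnᗮ ⊆ ker Tn, so (ker Tn)ᗮ ⊆ Xn
  have hVle : ∀ n, (LinearMap.ker (Tn n : X →ₗ[ℝ] Y))ᗮ ≤ Xn n := by
    intro n
    have h1 : (Xn n)ᗮ ≤ LinearMap.ker (Tn n : X →ₗ[ℝ] Y) := by
      intro u hu
      rw [LinearMap.mem_ker, ContinuousLinearMap.coe_coe, hTn n, ContinuousLinearMap.comp_apply, orthProj_eq_zero (Xn n) hu,
        map_zero]
    have h2 := Submodule.orthogonal_le h1
    rwa [Submodule.orthogonal_orthogonal (Xn n)] at h2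
  -- projection of T x onto T(Xn) when x ∈ Xn
  have hprojT : ∀ n, ∀ x ∈ Xn n, orthProj ((Xn n).map (T : X →ₗ[ℝ] Y)) (T x) = T x := by
    intro n x hx
    exact orthProj_eq_self _ (Submodule.mem_map_of_mem hx)
  -- the key uniqueness bound
  have hkey : ∀ n, ∀ v ∈ (LinearMap.ker (Tn n : X →ₗ[ℝ] Y))ᗮ, ∀ x : X,
      Tn n v = orthProj ((Xn n).map (T : X →ₗ[ℝ] Y)) (T x) → ‖v‖ ≤ C * ‖x‖ := by
    intro n v hv x hvx
    obtain ⟨hw1, hw2⟩ := hTdagn n (T x)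
    have hker : v - Tdagn n (T x) ∈ LinearMap.ker (Tn n : X →ₗ[ℝ] Y) := by
      rw [LinearMap.mem_ker, ContinuousLinearMap.coe_coe, map_sub, hw2, hvx, sub_self]
    have hperp : v - Tdagn n (T x) ∈ (LinearMap.ker (Tn n : X →ₗ[ℝ] Y))ᗮ := sub_mem hv hw1
    have hz : v - Tdagn n (T x) = 0 := by
      have := ((Submodule.mem_orthogonal _ _).1 hperp) _ hker
      exact inner_self_eq_zero.1 this
    have hveq : v = Tdagn n (T x) := by
      have := sub_eq_zero.1 hz; exact this
    rw [hveq]; exact hC n x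
  -- Part 1: kernel approximability
  have part1 : ∀ x : X, x ∈ LinearMap.ker (T : X →ₗ[ℝ] Y) ↔
      Tendsto (fun n => Metric.infDist x ((LinearMap.ker (T : X →ₗ[ℝ] Y) ⊓ Xn n : Submodule ℝ X) : Set X))
        atTop (𝓝 0) := by
    intro x
    constructor
    · intro hx
      have hTx : T x = 0 := hx
      have hbd : ∀ n, Metric.infDist x ((LinearMap.ker (T : X →ₗ[ℝ] Y) ⊓ Xn n : Submodule ℝ X) : Set X) ≤
          (1 + C) * ‖x - orthProj (Xn n) x‖ := by
        intro n
        set p : X := orthProj (Xn n) x with hp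
        set v : X := Tdagn n (T p) with hv
        have hpXn : p ∈ Xn n := orthProj_mem _ x
        have hvV : v ∈ (LinearMap.ker (Tn n : X →ₗ[ℝ] Y))ᗮ := (hTdagn n (T p)).1
        have hvXn : v ∈ Xn n := hVle n hvV
        have hTv : T v = T p := by
          have h2 := (hTdagn n (T p)).2
          rw [hTnXn n v hvXn] at h2
          rw [h2, hprojT n p hpXn]
        have hzmem : p - v ∈ (LinearMap.ker (T : X →ₗ[ℝ] Y) ⊓ Xn n : Submodule ℝ X) := by
          refine Submodule.mem_inf.2 ⟨?_, sub_mem hpXn hvXn⟩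
          rw [LinearMap.mem_ker, ContinuousLinearMap.coe_coe, map_sub, hTv, sub_self]
        have h1 : Metric.infDist x ((LinearMap.ker (T : X →ₗ[ℝ] Y) ⊓ Xn n : Submodule ℝ X) : Set X) ≤
            dist x (p - v) := Metric.infDist_le_dist_of_mem hzmem
        have hvnorm : ‖v‖ ≤ C * ‖x - p‖ := by
          have : T p = T (p - x) := by rw [map_sub, hTx, sub_zero]
          rw [hv, this]
          calc ‖Tdagn n (T (p - x))‖ ≤ C * ‖p - x‖ := hC n (p - x)
            _ = C * ‖x - p‖ := by rw [norm_sub_rev]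
        have h2 : dist x (p - v) ≤ ‖x - p‖ + ‖v‖ := by
          rw [dist_eq_norm]
          have habel : x - (p - v) = (x - p) + v := by abel
          calc ‖x - (p - v)‖ = ‖(x - p) + v‖ := by rw [habel]
            _ ≤ ‖x - p‖ + ‖v‖ := norm_add_le _ _
        calc Metric.infDist x ((LinearMap.ker (T : X →ₗ[ℝ] Y) ⊓ Xn n : Submodule ℝ X) : Set X)
            ≤ ‖x - p‖ + ‖v‖ := h1.trans h2
          _ ≤ ‖x - p‖ + C * ‖x - p‖ := by linarith [hvnorm]
          _ = (1 + C) * ‖x - p‖ := by ring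
      have htend : Tendsto (fun n => (1 + C) * ‖x - orthProj (Xn n) x‖) atTop (𝓝 0) := by
        have h1 : Tendsto (fun n => x - orthProj (Xn n) x) atTop (𝓝 (x - x)) :=
          tendsto_const_nhds.sub (hproj x)
        rw [sub_self] at h1
        have h2 := h1.norm
        rw [norm_zero] at h2
        have h3 := h2.const_mul (1 + C)
        rwa [mul_zero] at h3
      exact squeeze_zero (fun n => Metric.infDist_nonneg) hbd htend
    · intro h
      have hle : ∀ n, Metric.infDist x ((LinearMap.ker (T : X →ₗ[ℝ] Y) : Submodule ℝ X) : Set X) ≤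
          Metric.infDist x ((LinearMap.ker (T : X →ₗ[ℝ] Y) ⊓ Xn n : Submodule ℝ X) : Set X) := by
        intro n
        apply Metric.infDist_le_infDist_of_subset
        · intro y hy
          exact (Submodule.mem_inf.1 hy).1
        · exact ⟨0, Submodule.zero_mem _⟩
      have h0 : Metric.infDist x ((LinearMap.ker (T : X →ₗ[ℝ] Y) : Submodule ℝ X) : Set X) ≤ 0 :=
        ge_of_tendsto h (Eventually.of_forall hle)
      have heq : Metric.infDist x ((LinearMap.ker (T : X →ₗ[ℝ] Y) : Submodule ℝ X) : Set X) = 0 :=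
        le_antisymm h0 Metric.infDist_nonneg
      have hcl : x ∈ closure ((LinearMap.ker (T : X →ₗ[ℝ] Y) : Submodule ℝ X) : Set X) :=
        (Metric.mem_closure_iff_infDist_zero ⟨0, Submodule.zero_mem _⟩).2 heq
      rwa [(ContinuousLinearMap.isClosed_ker T).closure_eq] at hcl
  refine ⟨part1, ?_⟩
  -- Part 2
  set S : X →L[ℝ] X := (ContinuousLinearMap.adjoint T).comp T with hSdef
  have hSfin : ∀ n, FiniteDimensional ℝ ((Xn n).map (S : X →ₗ[ℝ] X)) := by
    intro n
    have h : (Xn n).map (S : X →ₗ[ℝ] X) = (Xn n).map S.toLinearMap := rfl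
    rw [h]; exact Module.Finite.map _ _
  haveI := hSfin
  have hMfin : ∀ n, FiniteDimensional ℝ ((Xn n).map ((orthProj N₀ᗮ : X →L[ℝ] X) : X →ₗ[ℝ] X)) := by
    intro n
    have h : (Xn n).map ((orthProj N₀ᗮ : X →L[ℝ] X) : X →ₗ[ℝ] X) = (Xn n).map (orthProj N₀ᗮ).toLinearMap := rfl
    rw [h]; exact Module.Finite.map _ _
  haveI := hMfin
  have hSinner : ∀ u x : X, inner ℝ (S u) x = (inner ℝ (T u) (T x) : ℝ) := by
    intro u x
    rw [hSdef, ContinuousLinearMap.comp_apply, ContinuousLinearMap.adjoint_inner_left]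
  have hN0W : ∀ n, N₀ ≤ ((Xn n).map (S : X →ₗ[ℝ] X))ᗮ := by
    intro n k hk
    rw [Submodule.mem_orthogonal]
    rintro w ⟨u, hu, rfl⟩
    have hTk : T k = 0 := hk
    rw [ContinuousLinearMap.coe_coe, hSinner u k, hTk, inner_zero_right]
  have hWN0 : ∀ n, (Xn n).map (S : X →ₗ[ℝ] X) ≤ N₀ᗮ := by
    intro n w hw
    rw [Submodule.mem_orthogonal']
    intro k hk
    obtain ⟨u, hu, rfl⟩ := hw
    have hTk : T k = 0 := hk
    rw [ContinuousLinearMap.coe_coe, hSinner u k, hTk, inner_zero_right]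
  have hsubN0 : ∀ v : X, v - orthProj N₀ᗮ v ∈ N₀ := by
    intro v
    have h := sub_orthProj_mem N₀ᗮ v
    rwa [Submodule.orthogonal_orthogonal N₀] at h
  have hQzero : ∀ k ∈ N₀, orthProj N₀ᗮ k = 0 := fun k hk =>
    orthProj_eq_zero _ (N₀.le_orthogonal_orthogonal hk)
  have hrep : ∀ n, ∀ x ∈ Xn n, ∃ v ∈ (LinearMap.ker (Tn n : X →ₗ[ℝ] Y))ᗮ, x - v ∈ N₀ := by
    intro n x hx
    refine ⟨Tdagn n (T x), (hTdagn n (T x)).1, ?_⟩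
    have h1 : T (Tdagn n (T x)) = T x := by
      have h2 := (hTdagn n (T x)).2
      rw [hTnXn n _ (hVle n (hTdagn n (T x)).1)] at h2
      rw [h2, hprojT n x hx]
    show T (x - Tdagn n (T x)) = 0
    rw [map_sub, h1, sub_self]
  have hi : ∀ n, ∀ v ∈ (LinearMap.ker (Tn n : X →ₗ[ℝ] Y))ᗮ, ‖v‖ ≤ C * ‖orthProj ((Xn n).map (S : X →ₗ[ℝ] X)) v‖ := by
    intro n v hv
    apply hkey n v hv (orthProj ((Xn n).map (S : X →ₗ[ℝ] X)) v)
    have hk : v - orthProj ((Xn n).map (S : X →ₗ[ℝ] X)) v ∈ ((Xn n).map (S : X →ₗ[ℝ] X))ᗮ := sub_orthProj_mem _ v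
    have hTk : T (v - orthProj ((Xn n).map (S : X →ₗ[ℝ] X)) v) ∈ ((Xn n).map (T : X →ₗ[ℝ] Y))ᗮ := by
      rw [Submodule.mem_orthogonal]
      rintro w ⟨u, hu, rfl⟩
      rw [ContinuousLinearMap.coe_coe, ← hSinner u _]
      exact ((Submodule.mem_orthogonal _ _).1 hk) (S u) (Submodule.mem_map_of_mem hu)
    have hcomp : orthProj ((Xn n).map (T : X →ₗ[ℝ] Y)) (T (orthProj ((Xn n).map (S : X →ₗ[ℝ] X)) v)) = T v := by
      have hsplit : T (orthProj ((Xn n).map (S : X →ₗ[ℝ] X)) v) = T v - T (v - orthProj ((Xn n).map (S : X →ₗ[ℝ] X)) v) := by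
        rw [map_sub]; abel
      rw [hsplit, map_sub, hprojT n v (hVle n hv), orthProj_eq_zero _ hTk, sub_zero]
    rw [hcomp]
    exact hTnXn n v (hVle n hv)
  have hii : ∀ n, ∀ v ∈ (LinearMap.ker (Tn n : X →ₗ[ℝ] Y))ᗮ, ‖v‖ ≤ C * ‖orthProj N₀ᗮ v‖ := by
    intro n v hv
    apply hkey n v hv (orthProj N₀ᗮ v)
    have h1 : T (orthProj N₀ᗮ v) = T v := by
      have h2 : T (v - orthProj N₀ᗮ v) = 0 := hsubN0 v
      rw [map_sub] at h2
      exact (sub_eq_zero.1 h2).symm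
    rw [h1, hprojT n v (hVle n hv)]
    exact hTnXn n v (hVle n hv)
  have hC2 : (0:ℝ) ≤ 1 - 1/C^2 := by
    have h1 : (1:ℝ) ≤ C^2 := by nlinarith
    have h2 : 1/C^2 ≤ (1:ℝ) := by rw [div_le_one (by positivity)]; exact h1
    linarith
  have hfinish : ∀ a : ℝ, a^2 ≤ 1 - 1/C^2 → a ≤ Real.sqrt (1 - 1/C^2) := by
    intro a h
    rcases le_or_gt a 0 with ha | ha
    · exact ha.trans (Real.sqrt_nonneg _)
    · rw [← Real.sqrt_sq ha.le]
      exact Real.sqrt_le_sqrt h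
  refine ⟨Real.sqrt (1 - 1/C^2), ?_, fun n => ?_⟩
  · have h1 : (0:ℝ) < 1/C^2 := by positivity
    have h2 : (1:ℝ) - 1/C^2 < 1 := by linarith
    calc Real.sqrt (1 - 1/C^2) < Real.sqrt 1 := Real.sqrt_lt_sqrt hC2 h2
      _ = 1 := Real.sqrt_one
  -- per n
  · haveI : FiniteDimensional ℝ ((LinearMap.ker (Tn n : X →ₗ[ℝ] Y))ᗮ : Submodule ℝ X) :=
      Submodule.finiteDimensional_of_le (hVle n)
    -- dimension count
    set V : Submodule ℝ X := (LinearMap.ker (Tn n : X →ₗ[ℝ] Y))ᗮ with hVdef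
    set W : Submodule ℝ X := (Xn n).map (S : X →ₗ[ℝ] X) with hWdef
    have hφ : ∃ φ : V →ₗ[ℝ] X, Function.Injective φ ∧ LinearMap.range φ = W := by
      refine ⟨S.toLinearMap.comp V.subtype, ?_, ?_⟩
      · rw [← LinearMap.ker_eq_bot, eq_bot_iff]
        rintro ⟨v, hvV⟩ hv
        have hSv : S v = 0 := hv
        have hTv : T v = 0 := by
          have h1 := hSinner v v
          rw [hSv, inner_zero_left] at h1
          exact inner_self_eq_zero.1 h1.symm
        have hker : v ∈ LinearMap.ker (Tn n : X →ₗ[ℝ] Y) := by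
          rw [LinearMap.mem_ker, ContinuousLinearMap.coe_coe, hTnXn n v (hVle n hvV), hTv]
        have hv0 : v = 0 :=
          inner_self_eq_zero.1 (((Submodule.mem_orthogonal' _ _).1 hvV) v hker)
        simpa using hv0
      · apply le_antisymm
        · rintro w ⟨⟨v, hvV⟩, rfl⟩
          exact Submodule.mem_map_of_mem (hVle n hvV)
        · rintro w ⟨x, hx, rfl⟩
          obtain ⟨v, hvV, hvN⟩ := hrep n x hx
          refine ⟨⟨v, hvV⟩, ?_⟩
          show S v = S x
          have hTxv : T (x - v) = 0 := hvN
          have : S (x - v) = 0 := by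
            rw [hSdef, ContinuousLinearMap.comp_apply, hTxv, map_zero]
          rw [map_sub] at this
          exact (sub_eq_zero.1 this).symm
    obtain ⟨φ, hφinj, hφrange⟩ := hφ
    have hdim : Module.finrank ℝ V = Module.finrank ℝ W := by
      rw [← hφrange, LinearMap.finrank_range_of_inj hφinj]
    have hA : ∀ u ∈ W, ∃ v ∈ V, orthProj W v = u := by
      have hAinj : Function.Injective
          (LinearMap.codRestrict W ((orthProj W).toLinearMap.comp V.subtype)
            (fun v => orthProj_mem W ↑v)) := by
        rw [← LinearMap.ker_eq_bot, eq_bot_iff]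
        rintro ⟨v, hvV⟩ hv
        have h0 : orthProj W v = 0 := by
          have := congrArg Subtype.val hv
          exact this
        have h1 := hi n v hvV
        rw [h0, norm_zero, mul_zero] at h1
        have : v = (0:X) := norm_le_zero_iff.1 h1
        simpa using this
      have hAsurj := (LinearMap.injective_iff_surjective_of_finrank_eq_finrank hdim).1 hAinj
      intro u huW
      obtain ⟨⟨v, hvV⟩, hAv⟩ := hAsurj ⟨u, huW⟩
      refine ⟨v, hvV, ?_⟩
      have := congrArg Subtype.val hAv
      exact this
    rw [gapSub]
    apply max_le
    -- δ(M, W) ≤ c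
    · apply Real.sSup_le _ (Real.sqrt_nonneg _)
      rintro d ⟨x, hxM, hxnorm, rfl⟩
      obtain ⟨z, hz, rfl⟩ := hxM
      obtain ⟨v, hvV, hvN⟩ := hrep n z hz
      have hQzv : orthProj N₀ᗮ z = orthProj N₀ᗮ v := by
        have h0 : orthProj N₀ᗮ (z - v) = 0 := hQzero _ hvN
        rw [map_sub] at h0
        exact sub_eq_zero.1 h0
      have hPW : orthProj W (orthProj N₀ᗮ v) = orthProj W v := by
        have h1 : v - orthProj N₀ᗮ v ∈ Wᗮ := hN0W n (hsubN0 v)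
        have h2 : orthProj W (v - orthProj N₀ᗮ v) = 0 := orthProj_eq_zero _ h1
        rw [map_sub] at h2
        exact (sub_eq_zero.1 h2).symm
      have hle1 : Metric.infDist (orthProj N₀ᗮ z) (W : Set X) ≤
          ‖orthProj N₀ᗮ z - orthProj W v‖ := by
        have := Metric.infDist_le_dist_of_mem (x := orthProj N₀ᗮ z) (orthProj_mem W v)
        rwa [dist_eq_norm] at this
      have hQv1 : ‖orthProj N₀ᗮ v‖ = 1 := by rw [← hQzv]; exact hxnorm
      have hnormv : 1 ≤ ‖v‖ := by
        rw [← hQv1]; exact norm_orthProj_le _ v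
      have hPWv : 1/C ≤ ‖orthProj W v‖ := by
        have h := hi n v hvV
        rw [div_le_iff₀ hCpos]
        nlinarith
      have hsq : ‖orthProj N₀ᗮ z - orthProj W v‖^2 ≤ 1 - 1/C^2 := by
        rw [hQzv, ← hPW]
        have hp := norm_sq_orthProj_add W (orthProj N₀ᗮ v)
        rw [hQv1] at hp
        have h2 : (1/C)^2 ≤ ‖orthProj W (orthProj N₀ᗮ v)‖^2 := by
          rw [hPW]
          exact pow_le_pow_left₀ (by positivity) hPWv 2
        have h3 : (1/C)^2 = 1/C^2 := by ring
        nlinarith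
      exact hle1.trans (hfinish _ hsq)
    -- δ(W, M) ≤ c
    · apply Real.sSup_le _ (Real.sqrt_nonneg _)
      rintro d ⟨u, huW, hu1, rfl⟩
      obtain ⟨v, hvV, hPWu⟩ := hA u huW
      set M : Submodule ℝ X := (Xn n).map ((orthProj N₀ᗮ : X →L[ℝ] X) : X →ₗ[ℝ] X) with hMdef
      have h1 : inner ℝ u v = (1:ℝ) := by
        rw [← hPWu, inner_orthProj_self W v, hPWu, hu1]
        norm_num
      set m : X := orthProj N₀ᗮ v with hmdef
      have hmM : m ∈ M := Submodule.mem_map_of_mem (hVle n hvV)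
      have h2 : inner ℝ u m = (1:ℝ) := by
        have hvm : v - m ∈ N₀ := hsubN0 v
        have hup : u ∈ N₀ᗮ := hWN0 n huW
        have h0 : inner ℝ u (v - m) = (0:ℝ) := by
          rw [real_inner_comm]
          exact ((Submodule.mem_orthogonal N₀ u).1 hup) _ hvm
        rw [inner_sub_right] at h0
        rw [h1] at h0
        linarith
      have hmnorm : ‖m‖ ≤ C := by
        calc ‖m‖ ≤ ‖v‖ := norm_orthProj_le _ _
          _ ≤ C * ‖orthProj W v‖ := hi n v hvV
          _ = C := by rw [hPWu, hu1, mul_one]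
      have hPMu : 1/C ≤ ‖orthProj M u‖ := by
        have h3 : inner ℝ (orthProj M u) m = (1:ℝ) := by
          have h4 : inner ℝ (u - orthProj M u) m = (0:ℝ) := inner_orthProj_sub M u hmM
          rw [inner_sub_left] at h4
          rw [h2] at h4
          linarith
        have h5 : (1:ℝ) ≤ ‖orthProj M u‖ * ‖m‖ := by
          rw [← h3]; exact real_inner_le_norm _ _
        rw [div_le_iff₀ hCpos]
        nlinarith [norm_nonneg (orthProj M u)]
      have hle1 : Metric.infDist u (M : Set X) ≤ ‖u - orthProj M u‖ := by
        have := Metric.infDist_le_dist_of_mem (x := u) (orthProj_mem M u)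
        rwa [dist_eq_norm] at this
      have hsq : ‖u - orthProj M u‖^2 ≤ 1 - 1/C^2 := by
        have hp := norm_sq_orthProj_add M u
        rw [hu1] at hp
        have h2' : (1/C)^2 ≤ ‖orthProj M u‖^2 := pow_le_pow_left₀ (by positivity) hPMu 2
        have h3 : (1/C)^2 = 1/C^2 := by ring
        nlinarith
      exact hle1.trans (hfinish _ hsq)
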